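/- The Osborn two-parameter deformation of the rank-one Witt algebra is right-symmetric: on the Laurent polynomial ring K[x, x⁻¹] over a field K of characteristic 0, for any scalars ε_1, ε_2 ∈ K, the multiplication u∘v = u'·v + ε_1·x⁻¹·u·v + ε_2·x⁻¹·u'·v (where u' is the formal derivative sending x^k to k·x^{k-1}) satisfies the right-symmetric identity u∘(v∘w) − (u∘v)∘w = u∘(w∘v) − (u∘w)∘v for all u, v, w ∈ K[x, x⁻¹]. -/

import Mathlib

open LaurentPolynomial

/-- the Osborn two-parameter deformation of the rank-one Witt algebra is
right-symmetric: on `K[x, x⁻¹]` (char 0), with `D` the formal derivative (the `K`-linear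
map with `D(xᵏ) = k·x^(k-1)`), the multiplication
`u∘v = u'·v + ε₁·x⁻¹·u·v + ε₂·x⁻¹·u'·v` satisfies the right-symmetric identity. -/
theorem osborn_deformation_right_symmetric {K : Type*} [Field K] [CharZero K]
    (D : LaurentPolynomial K →ₗ[K] LaurentPolynomial K)
    (hD : ∀ k : ℤ, D (T k) = k • T (k - 1))
    (ε₁ ε₂ : K)
    (omul : LaurentPolynomial K → LaurentPolynomial K → LaurentPolynomial K)
    (homul : ∀ u v : LaurentPolynomial K,
      omul u v = D u * v + ε₁ • (T (-1) * u * v) + ε₂ • (T (-1) * D u * v))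
    (u v w : LaurentPolynomial K) :
    omul u (omul v w) - omul (omul u v) w = omul u (omul w v) - omul (omul u w) v := by
  have hsmul : ∀ (a : K) (p : LaurentPolynomial K), a • p = C a * p := by
    intro a p
    rw [Algebra.smul_def]
    rfl
  have leib : ∀ p q : LaurentPolynomial K, D (p * q) = D p * q + p * D q := by
    intro p q
    induction q using LaurentPolynomial.induction_on' with
    | add q r hq hr =>
      rw [mul_add, map_add, map_add, hq, hr]; ring
    | C_mul_T m b =>
      induction p using LaurentPolynomial.induction_on' with
      | add p r hp hr =>
        rw [add_mul, map_add, map_add, hp, hr]; ring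
      | C_mul_T n a =>
        have key : (C a * T n) * (C b * T m) = (a * b) • T (n + m) := by
          rw [hsmul, T_add, map_mul]; ring
        have h1 : (T (n - 1) : LaurentPolynomial K) * T m = T (n + m - 1) := by
          rw [← T_add, show n - 1 + m = n + m - 1 by ring]
        have h2 : (T n : LaurentPolynomial K) * T (m - 1) = T (n + m - 1) := by
          rw [← T_add, show n + (m - 1) = n + m - 1 by ring]
        rw [key, map_smul, ← hsmul a (T n), ← hsmul b (T m), map_smul, map_smul,
          hD, hD, hD]
        simp only [smul_mul_assoc, mul_smul_comm, h1, h2]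
        module
  have hDt : D (T (-1) : LaurentPolynomial K) = -(T (-1) * T (-1)) := by
    rw [hD]
    have : (T (-1) * T (-1) : LaurentPolynomial K) = T (-2) := by
      rw [← T_add]; norm_num
    rw [this]
    norm_num
  simp only [homul, map_add, map_smul, leib, hDt, hsmul]
  ring
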